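/- Let A be a unital *-algebra with a faithful positive trace tr, and let ∂₁, ∂₂ be commuting *-derivations on A with tr(∂ⱼ(a)) = 0 for all a. For any projection p = p* = p² in A, the action S[p] = (1/4π) tr((∂₁p)² + (∂₂p)²) satisfies S[p] ≥ |c₁(p)|, where c₁(p) = (1/2πi) tr(p(∂₁p ∂₂p − ∂₂p ∂₁p)). -/

import Mathlib

/-- Basic Belavin–Polyakov bound `S[p] ≥ |c₁(p)|` for projections in a unital
*-algebra with a faithful positive invariant trace and two commuting *-derivations. -/
theorem action_ge_topological_charge {A : Type*} [Ring A] [Algebra ℂ A] [StarRing A]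
    (tr : A →ₗ[ℂ] ℂ)
    (htr : ∀ a b : A, tr (a * b) = tr (b * a))
    (hpos : ∀ a : A, 0 ≤ (tr (star a * a)).re ∧ (tr (star a * a)).im = 0)
    (hfaith : ∀ a : A, tr (star a * a) = 0 → a = 0)
    (d1 d2 : A →ₗ[ℂ] A)
    (hd1 : ∀ a b : A, d1 (a * b) = d1 a * b + a * d1 b)
    (hd2 : ∀ a b : A, d2 (a * b) = d2 a * b + a * d2 b)
    (hcomm : ∀ a : A, d1 (d2 a) = d2 (d1 a))
    (hstar1 : ∀ a : A, d1 (star a) = star (d1 a))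
    (hstar2 : ∀ a : A, d2 (star a) = star (d2 a))
    (htr1 : ∀ a : A, tr (d1 a) = 0) (htr2 : ∀ a : A, tr (d2 a) = 0)
    (p : A) (hp : p * p = p) (hps : star p = p) :
    ‖(1 / (2 * (Real.pi : ℂ) * Complex.I)) *
        tr (p * (d1 p * d2 p - d2 p * d1 p))‖
      ≤ (1 / (4 * Real.pi)) * (tr (d1 p * d1 p + d2 p * d2 p)).re := by
  ------------------------------------------------------------------
  -- Step 0 : star is conjugate-linear on `I`-multiples (derived from
  -- positivity + faithfulness, since StarModule is not assumed).
  ------------------------------------------------------------------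
  obtain ⟨i1, hi1⟩ : ∃ x : A, x = Complex.I • (1 : A) := ⟨_, rfl⟩
  have hcentI : ∀ x : A, i1 * x = x * i1 := by
    intro x; rw [hi1, smul_mul_assoc, one_mul, mul_smul_comm, mul_one]
  have hI1sq : i1 * i1 = -1 := by
    rw [hi1, smul_mul_assoc, one_mul, smul_smul, Complex.I_mul_I, neg_smul, one_smul]
  obtain ⟨w, hw⟩ : ∃ x : A, x = star i1 := ⟨_, rfl⟩
  have hwc : ∀ x : A, w * x = x * w := by
    intro x
    have h1 : w * x = star (star x * i1) := by rw [star_mul, star_star, hw]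
    rw [h1, ← hcentI (star x), star_mul, star_star, hw]
  have hw2 : w * w = -1 := by
    rw [hw, ← star_mul, hI1sq, star_neg, star_one]
  obtain ⟨u, hu⟩ : ∃ x : A, x = i1 * w := ⟨_, rfl⟩
  have hsu : star u = u := by rw [hu, star_mul, hw, star_star]
  have hu2 : u * u = 1 := by
    have h1 : w * i1 = i1 * w := hwc i1
    have e : i1 * w * (i1 * w) = i1 * i1 * (w * w) := by
      rw [mul_assoc, ← mul_assoc w, h1, mul_assoc, ← mul_assoc]
    rw [hu, e, hI1sq, hw2, neg_mul_neg, one_mul]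
  obtain ⟨r, hr⟩ : ∃ x : A, x = (1 : A) - u := ⟨_, rfl⟩
  have hsr : star r = r := by rw [hr, star_sub, star_one, hsu]
  have hrr : r * r = r + r := by
    rw [hr]
    simp only [sub_mul, mul_sub, one_mul, mul_one]
    rw [hu2]; abel
  have hur : u * r = -r := by
    rw [hr, mul_sub, mul_one, hu2]; abel
  obtain ⟨v, hv⟩ : ∃ x : A, x = i1 * r := ⟨_, rfl⟩
  have hwr : w * r = Complex.I • r := by
    have h2 : i1 * (w * r) = -r := by rw [← mul_assoc, ← hu, hur]
    have h3 : ((-Complex.I) • (1 : A)) * (i1 * (w * r))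
        = ((-Complex.I) • (1 : A)) * (-r) := by rw [h2]
    have h4 : ((-Complex.I) • (1 : A)) * i1 = 1 := by
      rw [hi1, smul_mul_assoc, one_mul, smul_smul]
      have : -Complex.I * Complex.I = 1 := by
        rw [neg_mul, Complex.I_mul_I, neg_neg]
      rw [this, one_smul]
    rw [← mul_assoc, h4, one_mul] at h3
    rw [h3, smul_mul_assoc, one_mul, smul_neg, ← neg_smul, neg_neg]
  have hsv : star v = v := by
    rw [hv, star_mul, hsr, ← hw, ← hwc r, hwr, hi1, smul_mul_assoc, one_mul]
  have hvv : v * v = -(r + r) := by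
    have hc : r * i1 = i1 * r := (hcentI r).symm
    have e : i1 * r * (i1 * r) = i1 * i1 * (r * r) := by
      rw [mul_assoc, ← mul_assoc r, hc, mul_assoc, ← mul_assoc]
    rw [hv, e, hI1sq, hrr, neg_one_mul]
  -- trace positivity forces r = 0
  have htrr : tr r = 0 := by
    have h1 := hpos r
    have h2 := hpos v
    rw [hsr, hrr, map_add] at h1
    rw [hsv, hvv, map_neg, map_add] at h2
    simp only [Complex.add_re, Complex.add_im, Complex.neg_re] at h1 h2
    apply Complex.ext
    · simp only [Complex.zero_re]; linarith [h1.1, h2.1]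
    · simp only [Complex.zero_im]; linarith [h1.2]
  have hr0 : r = 0 := by
    apply hfaith
    rw [hsr, hrr, map_add, htrr, add_zero]
  have hu1 : i1 * w = 1 := by
    have h := hr0
    rw [hr, sub_eq_zero] at h
    rw [← hu, ← h]
  have hwI : w = (-Complex.I) • (1 : A) := by
    have h3 := congrArg (fun x => ((-Complex.I) • (1 : A)) * x) hu1
    have h4 : ((-Complex.I) • (1 : A)) * i1 = 1 := by
      rw [hi1, smul_mul_assoc, one_mul, smul_smul]
      have : -Complex.I * Complex.I = 1 := by
        rw [neg_mul, Complex.I_mul_I, neg_neg]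
      rw [this, one_smul]
    rw [← mul_assoc, h4, one_mul, mul_one] at h3
    exact h3
  have hstarI : ∀ c : A, star (Complex.I • c) = (-Complex.I) • star c := by
    intro c
    have e : Complex.I • c = c * i1 := by rw [hi1, mul_smul_comm, mul_one]
    rw [e, star_mul, ← hw, hwI, smul_mul_assoc, one_mul]
  have hstarMI : ∀ c : A, star ((-Complex.I) • c) = Complex.I • star c := by
    intro c
    rw [neg_smul, star_neg, hstarI, neg_smul, neg_neg]
  ------------------------------------------------------------------
  -- Step 1 : basic facts about p and its derivatives
  ------------------------------------------------------------------
  set a := d1 p with ha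
  set b := d2 p with hb
  have hsa : star a = a := by
    have h := hstar1 p; rw [hps] at h; exact h.symm
  have hsb : star b = b := by
    have h := hstar2 p; rw [hps] at h; exact h.symm
  have hleib1 : a = a * p + p * a := by
    have := hd1 p p; rw [hp] at this; exact this
  have hleib2 : b = b * p + p * b := by
    have := hd2 p p; rw [hp] at this; exact this
  ------------------------------------------------------------------
  -- Step 2 : tr (star c) = conj (tr c)
  ------------------------------------------------------------------
  have htrI : (tr 1).im = 0 := by
    have := (hpos 1).2; simpa using this
  have hconj : ∀ c : A, tr (star c) = (starRingEnd ℂ) (tr c) := by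
    intro c
    have h1 := (hpos (1 + c)).2
    have e1 : star (1 + c) * (1 + c) = 1 + c + star c + star c * c := by
      rw [star_add, star_one]; noncomm_ring
    rw [e1, map_add, map_add, map_add] at h1
    simp only [Complex.add_im] at h1
    rw [htrI, (hpos c).2] at h1
    have h2 := (hpos (1 + Complex.I • c)).2
    have e2 : star (1 + Complex.I • c) * (1 + Complex.I • c)
        = 1 + Complex.I • c + (-Complex.I) • star c + star c * c := by
      rw [star_add, star_one, hstarI, add_mul, one_mul, mul_add, mul_one,
        smul_mul_smul_comm]
      have : -Complex.I * Complex.I = 1 := by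
        rw [neg_mul, Complex.I_mul_I, neg_neg]
      rw [this, one_smul]
      abel
    rw [e2, map_add, map_add, map_add, map_smul, map_smul] at h2
    simp only [smul_eq_mul, Complex.add_im, Complex.mul_im, Complex.neg_re,
      Complex.neg_im, Complex.I_re, Complex.I_im, zero_mul, one_mul, zero_add,
      add_zero, neg_zero, neg_mul, mul_zero] at h2
    rw [htrI, (hpos c).2] at h2
    apply Complex.ext
    · simp only [Complex.conj_re]; nlinarith [h2]
    · simp only [Complex.conj_im]; nlinarith [h1]
  ------------------------------------------------------------------
  -- Step 3 : the charge Q is purely imaginary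
  ------------------------------------------------------------------
  set Q := tr (p * (a * b - b * a)) with hQdef
  have hQre : Q.re = 0 := by
    have hst : star (p * (a * b - b * a)) = (b * a - a * b) * p := by
      rw [star_mul, star_sub, star_mul, star_mul, hsa, hsb, hps]
    have h1 := hconj (p * (a * b - b * a))
    rw [hst, htr (b * a - a * b) p] at h1
    have h2 : tr (p * (b * a - a * b)) = -Q := by
      rw [hQdef, mul_sub, mul_sub, map_sub, map_sub]; ring
    rw [h2] at h1
    have := congrArg Complex.re h1
    simp only [Complex.conj_re, Complex.neg_re] at this
    linarith
  ------------------------------------------------------------------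
  -- Step 4 : tr (c²) = 2 tr (p c²) for c = d p
  ------------------------------------------------------------------
  have hhalf : ∀ c : A, c = c * p + p * c → tr (c * c) = 2 * tr (p * (c * c)) := by
    intro c hc
    have h1 : tr (c * c) = tr ((c * p + p * c) * c) := by rw [← hc]
    rw [add_mul, map_add] at h1
    have h2 : tr (c * p * c) = tr (p * (c * c)) := by
      rw [htr (c * p) c, ← mul_assoc, htr (c * c) p]
    have h3 : tr (p * c * c) = tr (p * (c * c)) := by rw [mul_assoc]
    rw [h2, h3] at h1
    linear_combination h1
  have hhalf1 := hhalf a hleib1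
  have hhalf2 := hhalf b hleib2
  ------------------------------------------------------------------
  -- Step 5 : positivity of tr (x* x) for x = (a ± i b) p
  ------------------------------------------------------------------
  have expand : ∀ z : ℂ, star (z • b) = (starRingEnd ℂ z) • b →
      tr (star ((a + z • b) * p) * ((a + z • b) * p))
      = tr (p * (a * a)) + ((starRingEnd ℂ z) * z) * tr (p * (b * b))
        + z * tr (p * (a * b)) + (starRingEnd ℂ z) * tr (p * (b * a)) := by
    intro z hzb
    have hstarx : star ((a + z • b) * p)
        = p * (a + (starRingEnd ℂ z) • b) := by
      rw [star_mul, star_add, hsa, hzb, hps]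
    rw [hstarx]
    have cyc : ∀ s t : A, tr (p * s * (t * p)) = tr (p * (s * t)) := by
      intro s t
      rw [htr (p * s) (t * p)]
      have e : t * p * (p * s) = t * (p * s) := by
        rw [mul_assoc, ← mul_assoc p p s, hp]
      rw [e, htr t (p * s), mul_assoc]
    rw [cyc]
    have emul : (a + (starRingEnd ℂ z) • b) * (a + z • b)
        = a * a + z • (a * b) + (starRingEnd ℂ z) • (b * a)
          + (z * (starRingEnd ℂ z)) • (b * b) := by
      simp only [add_mul, mul_add, smul_mul_assoc, mul_smul_comm, smul_smul,
        smul_add]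
      abel
    rw [emul]
    simp only [mul_add, map_add, mul_smul_comm, map_smul, smul_eq_mul]
    ring
  have hzbI : star (Complex.I • b) = (starRingEnd ℂ Complex.I) • b := by
    rw [hstarI, hsb, Complex.conj_I]
  have hzbMI : star ((-Complex.I) • b) = (starRingEnd ℂ (-Complex.I)) • b := by
    rw [hstarMI, hsb, map_neg, Complex.conj_I, neg_neg]
  have eI := expand Complex.I hzbI
  have eMI := expand (-Complex.I) hzbMI
  rw [Complex.conj_I] at eI
  have hII : (-Complex.I) * Complex.I = 1 := by
    rw [neg_mul, Complex.I_mul_I, neg_neg]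
  rw [hII, one_mul] at eI
  rw [map_neg, Complex.conj_I, neg_neg] at eMI
  have hII2 : Complex.I * (-Complex.I) = 1 := by
    rw [mul_neg, Complex.I_mul_I, neg_neg]
  rw [hII2, one_mul] at eMI
  have hQab : tr (p * (a * b)) - tr (p * (b * a)) = Q := by
    rw [hQdef, mul_sub, map_sub]
  have hposI := (hpos ((a + Complex.I • b) * p)).1
  have hposMI := (hpos ((a + (-Complex.I) • b) * p)).1
  rw [eI] at hposI
  rw [eMI] at hposMI
  set Ta := tr (a * a) with hTa
  set Tb := tr (b * b) with hTb
  have eI' : tr (p * (a * a)) + tr (p * (b * b)) + Complex.I * tr (p * (a * b))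
      + (-Complex.I) * tr (p * (b * a)) = (Ta + Tb) / 2 + Complex.I * Q := by
    linear_combination (-(1:ℂ)/2) * hhalf1 + (-(1:ℂ)/2) * hhalf2 + Complex.I * hQab
  have eMI' : tr (p * (a * a)) + tr (p * (b * b)) + (-Complex.I) * tr (p * (a * b))
      + Complex.I * tr (p * (b * a)) = (Ta + Tb) / 2 - Complex.I * Q := by
    linear_combination (-(1:ℂ)/2) * hhalf1 + (-(1:ℂ)/2) * hhalf2 - Complex.I * hQab
  rw [eI'] at hposI
  rw [eMI'] at hposMI
  have hre1 : ((Ta + Tb) / 2 + Complex.I * Q).re = (Ta.re + Tb.re) / 2 - Q.im := by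
    simp [Complex.add_re, Complex.div_re, Complex.mul_re, Complex.normSq]
    try ring
  have hre2 : ((Ta + Tb) / 2 - Complex.I * Q).re = (Ta.re + Tb.re) / 2 + Q.im := by
    simp [Complex.sub_re, Complex.add_re, Complex.div_re, Complex.mul_re,
      Complex.normSq]
    try ring
  rw [hre1] at hposI
  rw [hre2] at hposMI
  ------------------------------------------------------------------
  -- Step 6 : conclusion
  ------------------------------------------------------------------
  have habs : ‖(1 / (2 * (Real.pi : ℂ) * Complex.I)) * Q‖
      = |Q.im| / (2 * Real.pi) := by
    rw [norm_mul, norm_div, norm_one, norm_mul, norm_mul, Complex.norm_I,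
      Complex.norm_two, Complex.norm_real, Real.norm_eq_abs, abs_of_pos Real.pi_pos, mul_one]
    have hQ : ‖Q‖ = |Q.im| := by
      rw [Complex.norm_def, Complex.normSq_apply, hQre]
      simp [Real.sqrt_mul_self_eq_abs]
    rw [hQ]; ring
  have hRHS : (tr (a * a + b * b)).re = Ta.re + Tb.re := by
    rw [map_add]; rfl
  show ‖(1 / (2 * (Real.pi : ℂ) * Complex.I)) * Q‖
      ≤ (1 / (4 * Real.pi)) * (tr (a * a + b * b)).re
  rw [habs, hRHS]
  have hπ := Real.pi_pos
  rw [div_le_iff₀ (by positivity)]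
  have h1 : |Q.im| ≤ (Ta.re + Tb.re) / 2 := by
    rw [abs_le]; constructor <;> linarith
  calc |Q.im| ≤ (Ta.re + Tb.re) / 2 := h1
    _ = 1 / (4 * Real.pi) * (Ta.re + Tb.re) * (2 * Real.pi) := by
        field_simp
        ring
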